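/- Let K = ℚ(s,u,v) and work in K[[ξ]]. Let G(ξ) = ∑_{n≥1} sⁿ·ξ^{n+1} · ∑_{k=1}^{n} N_{n,k}·u^{n+1-k}·v^{k}, where N_{n,k} = (1/n)·C(n,k)·C(n,k-1) are the Narayana numbers, and set y = -1/(2s) + (u+v)·ξ/2 + G(ξ). Then y² = 1/(4s²) - (u+v)·ξ/(2s) + (u-v)²·ξ²/4. (This is the dessin spectral curve y² = 1/(4s²) - (u+v)/(2sx) + (u-v)²/(4x²) written in the variable ξ = 1/x.) -/

import Mathlib

noncomputable section

/-- The field `ℚ(s,u,v)` of rational functions in three indeterminates over `ℚ`. -/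
abbrev DessinField : Type := FractionRing (MvPolynomial (Fin 3) ℚ)

def ds : DessinField := algebraMap (MvPolynomial (Fin 3) ℚ) DessinField (MvPolynomial.X 0)
def du : DessinField := algebraMap (MvPolynomial (Fin 3) ℚ) DessinField (MvPolynomial.X 1)
def dv : DessinField := algebraMap (MvPolynomial (Fin 3) ℚ) DessinField (MvPolynomial.X 2)

/-- The genus-zero one-point function of dessins, `G(ξ) = ∑_{n≥1} sⁿ ξ^{n+1}
∑_{k=1}^n N_{n,k} u^{n+1-k} v^k`. -/
def dessinG01 : PowerSeries DessinField :=
  PowerSeries.mk fun m => if 2 ≤ m then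
    ds ^ (m - 1) * ∑ k ∈ Finset.Icc 1 (m - 1),
      ((((m - 1 : ℕ) : DessinField))⁻¹ * ((m - 1).choose k : DessinField)
        * ((m - 1).choose (k - 1) : DessinField)) * du ^ (m - k) * dv ^ k
  else 0

namespace DessinAux

/-- `dd m n k = [x^n t^k] F(x,t)^m = (m/n) C(n,k) C(n,k-m)` (zero out of range). -/
def dd (m n k : ℕ) : ℚ :=
  if m ≤ k then (m : ℚ) / n * (n.choose k) * (n.choose (k - m)) else 0

lemma dd_of_le {m n k : ℕ} (h : m ≤ k) :
    dd m n k = (m : ℚ) / n * (n.choose k) * (n.choose (k - m)) := if_pos h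

lemma dd_of_klt {m n k : ℕ} (h : k < m) : dd m n k = 0 := if_neg (by omega)

lemma dd_of_nlt {m n k : ℕ} (h : n < k) : dd m n k = 0 := by
  unfold dd
  rw [Nat.choose_eq_zero_of_lt h]
  simp

lemma dd_zero_left (n k : ℕ) : dd 0 n k = 0 := by
  unfold dd; simp

lemma dd_k0 (m n : ℕ) : dd m n 0 = 0 := by
  rcases Nat.eq_zero_or_pos m with h | h
  · subst h; exact dd_zero_left n 0
  · exact dd_of_klt h

/-- cast form of the absorption identity -/
lemma choose_rel (p j : ℕ) (hj : j ≤ p) :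
    ((p.choose (j+1) : ℚ)) * (j+1) = (p.choose j) * ((p : ℚ) - j) := by
  have := Nat.choose_succ_right_eq p j
  have h2 : ((p.choose (j+1) * (j+1) : ℕ) : ℚ) = ((p.choose j * (p - j) : ℕ) : ℚ) := by
    exact_mod_cast congrArg (Nat.cast (R := ℚ)) this
  push_cast [Nat.cast_sub hj] at h2
  linarith [h2]

set_option maxHeartbeats 1600000 in
/-- The key binomial identity. -/
lemma kbi (m n k : ℕ) (hm : 1 ≤ m) (hmn : m ≤ n) (hn : 2 ≤ n) :
    dd m n k = dd (m+1) (n-1) k + dd m (n-1) k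
      + dd m (n-1) (k-1) + dd (m-1) (n-1) (k-1) := by
  rcases lt_or_ge k m with hk | hk
  · -- k < m : everything vanishes
    rw [dd_of_klt hk, dd_of_klt (by omega), dd_of_klt (by omega)]
    have h3 : dd m (n-1) (k-1) = 0 := dd_of_klt (by omega)
    have h4 : dd (m-1) (n-1) (k-1) = 0 := by
      rcases Nat.eq_zero_or_pos (m-1) with h | h
      · rw [h]; exact dd_zero_left _ _
      · exact dd_of_klt (by omega)
    rw [h3, h4]; ring
  rcases lt_or_ge n k with hk2 | hk2
  · -- n < k : everything vanishes
    rw [dd_of_nlt hk2, dd_of_nlt (by omega), dd_of_nlt (by omega),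
      dd_of_nlt (show n-1 < k-1 by omega), dd_of_nlt (show n-1 < k-1 by omega)]
    ring
  -- main range m ≤ k ≤ n
  rcases eq_or_lt_of_le hk with hkm | hkm
  · -- k = m
    subst hkm
    rw [dd_of_le le_rfl, dd_of_klt (by omega), dd_of_le le_rfl, dd_of_klt (by omega),
      dd_of_le (le_refl (m-1))]
    rcases eq_or_lt_of_le hm with h1 | h1
    · -- m = 1
      rw [← h1]
      simp only [Nat.sub_self, Nat.choose_zero_right, Nat.cast_one, Nat.cast_zero]
      have e1 : (n.choose 1 : ℚ) = n := by
        rw [Nat.choose_one_right]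
      have e2 : ((n-1).choose 1 : ℚ) = (n : ℚ) - 1 := by
        rw [Nat.choose_one_right, Nat.cast_sub (by omega)]; norm_num
      have e3 : ((n-1 : ℕ) : ℚ) = (n : ℚ) - 1 := by
        rw [Nat.cast_sub (by omega)]; norm_num
      rw [e1, e2, e3]
      have hn0 : (n : ℚ) ≠ 0 := by positivity
      have hn1 : (n : ℚ) - 1 ≠ 0 := by
        have : (2 : ℚ) ≤ n := by exact_mod_cast hn
        intro h; nlinarith
      field_simp
      ring
    · -- 2 ≤ m
      have h2m : 2 ≤ m := h1
      -- identity: m/n C(n,m) = m/(n-1) C(n-1,m) + (m-1)/(n-1) C(n-1,m-1)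
      have pascal : (n.choose m : ℚ) = ((n-1).choose m : ℚ) + ((n-1).choose (m-1) : ℚ) := by
        have hh : n.choose m = (n-1).choose (m-1) + (n-1).choose m := by
          calc n.choose m = ((n-1)+1).choose ((m-1)+1) := by congr 1 <;> omega
          _ = (n-1).choose (m-1) + (n-1).choose ((m-1)+1) := Nat.choose_succ_succ _ _
          _ = (n-1).choose (m-1) + (n-1).choose m := by congr 2; omega
        rw [hh]; push_cast; ring
      have rel : (m : ℚ) * ((n-1).choose m) = ((n:ℚ) - m) * ((n-1).choose (m-1)) := by
        have := choose_rel (n-1) (m-1) (by omega)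
        have e : (m-1)+1 = m := by omega
        rw [e] at this
        have ec : ((m-1:ℕ):ℚ) = (m:ℚ) - 1 := by
          rw [Nat.cast_sub (by omega)]; norm_num
        rw [ec] at this
        have ep : ((n-1:ℕ):ℚ) = (n:ℚ) - 1 := by
          rw [Nat.cast_sub (by omega)]; norm_num
        rw [ep] at this
        -- this : C(n-1,m) * (m-1+1) = C(n-1,m-1) * ((n-1) - (m-1))
        ring_nf at this ⊢
        linarith [this]
      have hn0 : (n : ℚ) ≠ 0 := by positivity
      have hn1 : ((n-1:ℕ) : ℚ) ≠ 0 := by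
        have : (1:ℚ) ≤ ((n-1:ℕ):ℚ) := by exact_mod_cast Nat.one_le_iff_ne_zero.mpr (by omega)
        intro h; rw [h] at this; norm_num at this
      have ep : ((n-1:ℕ):ℚ) = (n:ℚ) - 1 := by
        rw [Nat.cast_sub (by omega)]; norm_num
      have ec : ((m-1:ℕ):ℚ) = (m:ℚ) - 1 := by
        rw [Nat.cast_sub (by omega)]; norm_num
      rw [Nat.sub_self, Nat.sub_self, Nat.choose_zero_right, Nat.choose_zero_right]
      rw [pascal, ep, ec]
      rw [ep] at hn1
      field_simp
      nlinarith [rel, sq_nonneg ((n:ℚ))]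
  · -- m+1 ≤ k ≤ n
    have hk1 : m + 1 ≤ k := hkm
    rw [dd_of_le (by omega), dd_of_le (by omega), dd_of_le (by omega),
      dd_of_le (show m ≤ k-1 by omega), dd_of_le (show m-1 ≤ k-1 by omega)]
    have e1 : k - (m+1) = k - m - 1 := by omega
    have e2 : (k-1) - m = k - m - 1 := by omega
    have e3 : (k-1) - (m-1) = k - m := by omega
    rw [e1, e2, e3]
    set A : ℚ := ((n-1).choose k : ℚ) with hA
    set B : ℚ := ((n-1).choose (k-1) : ℚ) with hB
    set A' : ℚ := ((n-1).choose (k-m) : ℚ) with hA'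
    set B' : ℚ := ((n-1).choose (k-m-1) : ℚ) with hB'
    have pascal1 : (n.choose k : ℚ) = A + B := by
      have hh : n.choose k = (n-1).choose (k-1) + (n-1).choose k := by
        calc n.choose k = ((n-1)+1).choose ((k-1)+1) := by congr 1 <;> omega
        _ = (n-1).choose (k-1) + (n-1).choose ((k-1)+1) := Nat.choose_succ_succ _ _
        _ = (n-1).choose (k-1) + (n-1).choose k := by congr 2; omega
      rw [hh]; push_cast; ring
    have pascal2 : (n.choose (k-m) : ℚ) = A' + B' := by
      have hh : n.choose (k-m) = (n-1).choose (k-m-1) + (n-1).choose (k-m) := by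
        calc n.choose (k-m) = ((n-1)+1).choose ((k-m-1)+1) := by congr 1 <;> omega
        _ = (n-1).choose (k-m-1) + (n-1).choose ((k-m-1)+1) := Nat.choose_succ_succ _ _
        _ = (n-1).choose (k-m-1) + (n-1).choose (k-m) := by congr 2; omega
      rw [hh]; push_cast; ring
    have ckq : ((k-1:ℕ):ℚ) = (k:ℚ) - 1 := by rw [Nat.cast_sub (by omega)]; norm_num
    have ckmq : ((k-m:ℕ):ℚ) = (k:ℚ) - m := by rw [Nat.cast_sub (by omega)]
    have ckm1q : ((k-m-1:ℕ):ℚ) = (k:ℚ) - m - 1 := by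
      have : k-m-1 = k - (m+1) := by omega
      rw [this, Nat.cast_sub (by omega)]; push_cast; ring
    have epq : ((n-1:ℕ):ℚ) = (n:ℚ) - 1 := by rw [Nat.cast_sub (by omega)]; norm_num
    have r1 : (k:ℚ) * A = ((n:ℚ) - k) * B := by
      have := choose_rel (n-1) (k-1) (by omega)
      have ee : (k-1)+1 = k := by omega
      rw [ee, ckq, epq] at this
      rw [← hA, ← hB] at this
      linarith [this]
    have r2 : ((k:ℚ) - m) * A' = ((n:ℚ) - k + m) * B' := by
      have := choose_rel (n-1) (k-m-1) (by omega)
      have ee : (k-m-1)+1 = k-m := by omega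
      rw [ee, ckm1q, epq] at this
      rw [← hA', ← hB'] at this
      linarith [this]
    have hn0 : (n:ℚ) ≠ 0 := by positivity
    have hn1 : (n:ℚ) - 1 ≠ 0 := by
      have : (2:ℚ) ≤ (n:ℚ) := by exact_mod_cast hn
      intro h; nlinarith
    have hk0 : (k:ℚ) ≠ 0 := by
      have : (1:ℚ) ≤ (k:ℚ) := by exact_mod_cast (show 1 ≤ k by omega)
      intro h; nlinarith
    have hkm0 : (k:ℚ) - m ≠ 0 := by
      have : (m:ℚ) + 1 ≤ (k:ℚ) := by exact_mod_cast hk1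
      intro h; nlinarith
    have sA : A = ((n:ℚ) - k) * B / k := by
      field_simp
      linarith [r1]
    have sA' : A' = ((n:ℚ) - k + m) * B' / ((k:ℚ) - m) := by
      field_simp
      linarith [r2]
    have cm1 : ((m-1:ℕ):ℚ) = (m:ℚ) - 1 := by rw [Nat.cast_sub (by omega)]; norm_num
    rw [pascal1, pascal2, epq, cm1, sA, sA']
    push_cast
    field_simp
    ring


/-- scalar coefficients inside the field -/
def ddK (m n k : ℕ) : DessinField := ((dd m n k : ℚ) : DessinField)

lemma ddK_of_nlt {m n k : ℕ} (h : n < k) : ddK m n k = 0 := by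
  rw [ddK, dd_of_nlt h]; norm_num

lemma ddK_of_klt {m n k : ℕ} (h : k < m) : ddK m n k = 0 := by
  rw [ddK, dd_of_klt h]; norm_num

lemma ddK_k0 (m n : ℕ) : ddK m n 0 = 0 := by
  rw [ddK, dd_k0]; norm_num

lemma ddK_zero_left (n k : ℕ) : ddK 0 n k = 0 := by
  rw [ddK, dd_zero_left]; norm_num

/-- `Phi m` corresponds to `(uξ)^m F(suξ, v/u)^m`. -/
def Phi (m : ℕ) : PowerSeries DessinField :=
  if m = 0 then 1 else
    PowerSeries.mk fun N =>
      ds ^ (N - m) * ∑ k ∈ Finset.range (N+1), ddK m (N-m) k * (du ^ (N-k) * dv ^ k)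

lemma coeff_Phi (m N : ℕ) (h : 1 ≤ m ∨ 1 ≤ N) :
    PowerSeries.coeff (R := DessinField) N (Phi m)
      = ds ^ (N-m) * ∑ k ∈ Finset.range (N+1), ddK m (N-m) k * (du ^ (N-k) * dv ^ k) := by
  rcases Nat.eq_zero_or_pos m with h0 | h0
  · subst h0
    have hN : 1 ≤ N := h.resolve_left (by omega)
    simp [Phi, ddK_zero_left, PowerSeries.coeff_one, (show ¬ N = 0 by omega)]
  · rw [Phi, if_neg (by omega), PowerSeries.coeff_mk]

lemma coeff_Phi_zero (m N : ℕ) (hm : 1 ≤ m) (h : N < 2*m) :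
    PowerSeries.coeff (R := DessinField) N (Phi m) = 0 := by
  rw [coeff_Phi m N (Or.inl hm)]
  have : ∑ k ∈ Finset.range (N+1), ddK m (N-m) k * (du ^ (N-k) * dv ^ k) = 0 := by
    apply Finset.sum_eq_zero
    intro k hk
    rcases Nat.lt_or_ge k m with hkm | hkm
    · rw [ddK_of_klt hkm, zero_mul]
    · rw [ddK_of_nlt (show N - m < k by omega), zero_mul]
  rw [this, mul_zero]

set_option maxHeartbeats 1600000 in
lemma star (m : ℕ) (hm : 1 ≤ m) :
    Phi m = PowerSeries.C (R := DessinField) ds * Phi (m+1)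
      + PowerSeries.C (R := DessinField) (ds*(du+dv)) * (Phi m * PowerSeries.X ^ 1)
      + PowerSeries.C (R := DessinField) (ds*du*dv) * (Phi (m-1) * PowerSeries.X ^ 2) := by
  ext N
  rw [map_add, map_add, PowerSeries.coeff_C_mul, PowerSeries.coeff_C_mul,
    PowerSeries.coeff_C_mul, PowerSeries.coeff_mul_X_pow', PowerSeries.coeff_mul_X_pow']
  by_cases hsm : N < 2*m
  · have hA : (if 1 ≤ N then PowerSeries.coeff (R := DessinField) (N-1) (Phi m) else 0) = 0 := by
      split_ifs with h
      · exact coeff_Phi_zero m (N-1) hm (by omega)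
      · rfl
    have hB : (if 2 ≤ N then PowerSeries.coeff (R := DessinField) (N-2) (Phi (m-1)) else 0) = 0 := by
      split_ifs with h
      · rcases eq_or_lt_of_le hm with h1 | h1
        · exfalso; omega
        · exact coeff_Phi_zero (m-1) (N-2) (by omega) (by omega)
      · rfl
    rw [coeff_Phi_zero m N hm hsm, coeff_Phi_zero (m+1) N (by omega) (by omega), hA, hB]
    ring
  · push_neg at hsm
    by_cases hsp : m = 1 ∧ N = 2
    · obtain ⟨hm1, hN2⟩ := hsp
      subst hm1; subst hN2
      rw [coeff_Phi 1 2 (Or.inl le_rfl), coeff_Phi 2 2 (Or.inl (by omega)),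
        if_pos (by omega : 1 ≤ 2), if_pos (le_refl 2), coeff_Phi 1 1 (Or.inl le_rfl)]
      have h0 : PowerSeries.coeff (R := DessinField) 0 (Phi (1-1)) = 1 := by
        simp [Phi]
      rw [h0]
      simp only [Finset.sum_range_succ, Finset.sum_range_zero, ddK, dd]
      norm_num
      ring
    · -- general case : 2*m ≤ N, and (2 ≤ m ∨ 3 ≤ N)
      have hN1 : 1 ≤ N := by omega
      have hN2 : 2 ≤ N := by omega
      have hn2 : 2 ≤ N - m := by omega
      rw [if_pos hN1, if_pos hN2,
        coeff_Phi m N (Or.inl hm), coeff_Phi (m+1) N (Or.inl (by omega)),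
        coeff_Phi m (N-1) (Or.inl hm), coeff_Phi (m-1) (N-2) (by omega)]
      rw [show N - (m+1) = N - m - 1 from by omega,
          show N - 1 - m = N - m - 1 from by omega,
          show N - 2 - (m-1) = N - m - 1 from by omega]
      have step1 : du * ∑ k ∈ Finset.range ((N-1)+1), ddK m (N-m-1) k * (du ^ ((N-1)-k) * dv ^ k)
          = ∑ k ∈ Finset.range (N+1), ddK m (N-m-1) k * (du ^ (N-k) * dv ^ k) := by
        rw [Finset.mul_sum]
        conv_rhs => rw [show Finset.range (N+1) = Finset.range ((N-1+1)+1) from by congr 1; omega,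
          Finset.sum_range_succ]
        rw [ddK_of_nlt (show N-m-1 < N-1+1 by omega), zero_mul, add_zero]
        apply Finset.sum_congr rfl
        intro k hk
        have hkN : k ≤ N - 1 := by
          simpa [Nat.lt_succ_iff] using hk
        rw [show N - k = ((N-1)-k)+1 from by omega, pow_succ]
        ring
      have step2 : dv * ∑ k ∈ Finset.range ((N-1)+1), ddK m (N-m-1) k * (du ^ ((N-1)-k) * dv ^ k)
          = ∑ k ∈ Finset.range (N+1), ddK m (N-m-1) (k-1) * (du ^ (N-k) * dv ^ k) := by
        rw [Finset.sum_range_succ' (fun k => ddK m (N-m-1) (k-1) * (du ^ (N-k) * dv ^ k)) N]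
        simp only [Nat.add_sub_cancel, Nat.zero_sub, ddK_k0, zero_mul, add_zero]
        rw [show N - 1 + 1 = N from by omega, Finset.mul_sum]
        apply Finset.sum_congr rfl
        intro k hk
        have hkN : k < N := Finset.mem_range.mp hk
        rw [show N - (k+1) = (N-1)-k from by omega, pow_succ]
        ring
      have step3 : du * dv * ∑ k ∈ Finset.range ((N-2)+1), ddK (m-1) (N-m-1) k * (du ^ ((N-2)-k) * dv ^ k)
          = ∑ k ∈ Finset.range (N+1), ddK (m-1) (N-m-1) (k-1) * (du ^ (N-k) * dv ^ k) := by
        rw [Finset.sum_range_succ' (fun k => ddK (m-1) (N-m-1) (k-1) * (du ^ (N-k) * dv ^ k)) N]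
        simp only [Nat.add_sub_cancel, Nat.zero_sub, ddK_k0, zero_mul, add_zero]
        conv_rhs => rw [show Finset.range N = Finset.range ((N-2+1)+1) from by congr 1; omega,
          Finset.sum_range_succ]
        rw [ddK_of_nlt (show N-m-1 < N-2+1 by omega), zero_mul, add_zero]
        rw [Finset.mul_sum]
        apply Finset.sum_congr rfl
        intro k hk
        have hkN : k ≤ N - 2 := by
          simpa [Nat.lt_succ_iff] using hk
        rw [show N - (k+1) = ((N-2)-k)+1 from by omega, pow_succ]
        ring
      have key : ∑ k ∈ Finset.range (N+1), ddK m (N-m) k * (du ^ (N-k) * dv ^ k)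
          = (∑ k ∈ Finset.range (N+1), ddK (m+1) (N-m-1) k * (du ^ (N-k) * dv ^ k))
            + ((du+dv) * ∑ k ∈ Finset.range ((N-1)+1), ddK m (N-m-1) k * (du ^ ((N-1)-k) * dv ^ k))
            + (du * dv * ∑ k ∈ Finset.range ((N-2)+1), ddK (m-1) (N-m-1) k * (du ^ ((N-2)-k) * dv ^ k)) := by
        rw [add_mul, step1, step2, step3, ← Finset.sum_add_distrib, ← Finset.sum_add_distrib,
          ← Finset.sum_add_distrib]
        apply Finset.sum_congr rfl
        intro k _
        have hq := kbi m (N-m) k hm (by omega) hn2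
        have hqK : ddK m (N-m) k = ddK (m+1) (N-m-1) k + ddK m (N-m-1) k
            + ddK m (N-m-1) (k-1) + ddK (m-1) (N-m-1) (k-1) := by
          simp only [ddK]
          rw [hq]
          push_cast
          ring
        rw [hqK]
        ring
      rw [show N - m = (N-m-1)+1 from by omega] at key ⊢
      rw [show ((N-m-1)+1) - 1 = N-m-1 from by omega] at key ⊢
      rw [key]
      ring

lemma coeff_mul_Phi_zero (m₁ m₂ N : ℕ) (h1 : 1 ≤ m₁) (h2 : 1 ≤ m₂)
    (h : N < 2*m₁ + 2*m₂) :
    PowerSeries.coeff (R := DessinField) N (Phi m₁ * Phi m₂) = 0 := by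
  rw [PowerSeries.coeff_mul]
  apply Finset.sum_eq_zero
  intro p hp
  rw [Finset.HasAntidiagonal.mem_antidiagonal] at hp
  rcases Nat.lt_or_ge p.1 (2*m₁) with h' | h'
  · rw [coeff_Phi_zero m₁ p.1 h1 h', zero_mul]
  · rw [coeff_Phi_zero m₂ p.2 h2 (by omega), mul_zero]

def EE (m : ℕ) : PowerSeries DessinField := Phi 1 * Phi m - Phi (m+1)

lemma EE_zero : EE 0 = 0 := by
  unfold EE
  rw [show Phi 0 = 1 from by simp [Phi], mul_one, sub_self]

lemma EE_rec (m : ℕ) : EE (m+1) = PowerSeries.C (R := DessinField) ds * EE (m+1+1)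
    + PowerSeries.C (R := DessinField) (ds*(du+dv)) * (EE (m+1) * PowerSeries.X^1)
    + PowerSeries.C (R := DessinField) (ds*du*dv) * (EE m * PowerSeries.X^2) := by
  have S1 := star (m+1) (by omega)
  have S2 := star (m+1+1) (by omega)
  simp only [Nat.add_sub_cancel] at S1 S2
  unfold EE
  linear_combination Phi 1 * S1 - S2

lemma EE_coeff (μ : ℕ) : ∀ N m, N + (N - 2*m) ≤ μ → 1 ≤ m →
    PowerSeries.coeff (R := DessinField) N (EE m) = 0 := by
  induction μ using Nat.strong_induction_on with
  | _ μ IH =>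
    intro N m hμ hm
    by_cases hbase : N < 2*m + 2
    · unfold EE
      rw [map_sub, coeff_mul_Phi_zero 1 m N le_rfl hm (by omega),
        coeff_Phi_zero (m+1) N (by omega) (by omega), sub_zero]
    · push_neg at hbase
      obtain ⟨m', rfl⟩ : ∃ m', m = m' + 1 := ⟨m-1, by omega⟩
      rw [EE_rec m']
      rw [map_add, map_add, PowerSeries.coeff_C_mul, PowerSeries.coeff_C_mul,
        PowerSeries.coeff_C_mul, PowerSeries.coeff_mul_X_pow', PowerSeries.coeff_mul_X_pow']
      have t1 : PowerSeries.coeff (R := DessinField) N (EE (m'+1+1)) = 0 :=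
        IH (N + (N - 2*(m'+1+1))) (by omega) N (m'+1+1) le_rfl (by omega)
      have t2 : (if 1 ≤ N then PowerSeries.coeff (R := DessinField) (N-1) (EE (m'+1)) else 0) = 0 := by
        rw [if_pos (by omega : 1 ≤ N)]
        exact IH ((N-1) + ((N-1) - 2*(m'+1))) (by omega) (N-1) (m'+1) le_rfl (by omega)
      have t3 : (if 2 ≤ N then PowerSeries.coeff (R := DessinField) (N-2) (EE m') else 0) = 0 := by
        rw [if_pos (by omega : 2 ≤ N)]
        rcases Nat.eq_zero_or_pos m' with h0 | h0
        · subst h0; rw [EE_zero, map_zero]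
        · exact IH ((N-2) + ((N-2) - 2*m')) (by omega) (N-2) m' le_rfl h0
      rw [t1, t2, t3]
      ring

lemma Phi_sq : Phi 1 * Phi 1 = Phi (1+1) := by
  have hE : EE 1 = 0 := by
    ext N
    rw [map_zero]
    exact EE_coeff (N + (N - 2)) N 1 le_rfl le_rfl
  have := sub_eq_zero.mp (by rw [← hE]; rfl : Phi 1 * Phi 1 - Phi (1+1) = 0)
  exact this

lemma quad : Phi 1 = PowerSeries.C (R := DessinField) ds * (Phi 1 * Phi 1)
    + PowerSeries.C (R := DessinField) (ds*(du+dv)) * (Phi 1 * PowerSeries.X^1)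
    + PowerSeries.C (R := DessinField) (ds*du*dv) * PowerSeries.X^2 := by
  have q := star 1 le_rfl
  rw [show (1:ℕ) - 1 = 0 from rfl, show Phi 0 = 1 from by simp [Phi], one_mul] at q
  rw [Phi_sq]
  exact q

end DessinAux


namespace DessinAux

lemma G_eq : dessinG01 = Phi 1 := by
  ext N
  rw [dessinG01, PowerSeries.coeff_mk]
  by_cases hN : 2 ≤ N
  · rw [if_pos hN, coeff_Phi 1 N (Or.inl le_rfl)]
    congr 1
    have hsub : Finset.Icc 1 (N-1) ⊆ Finset.range (N+1) := by
      intro k hk; rw [Finset.mem_Icc] at hk; rw [Finset.mem_range]; omega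
    have hout : ∀ k ∈ Finset.range (N+1), k ∉ Finset.Icc 1 (N-1) →
        ddK 1 (N-1) k * (du ^ (N-k) * dv ^ k) = 0 := by
      intro k hk hnk
      rw [Finset.mem_range] at hk
      rw [Finset.mem_Icc] at hnk
      push_neg at hnk
      rcases Nat.eq_zero_or_pos k with h0 | h0
      · subst h0; rw [ddK_k0, zero_mul]
      · rw [ddK_of_nlt (show N - 1 < k by omega), zero_mul]
    rw [← Finset.sum_subset hsub hout]
    apply Finset.sum_congr rfl
    intro k hk
    rw [Finset.mem_Icc] at hk
    rw [ddK, dd_of_le hk.1]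
    push_cast
    rw [one_div]
    ring
  · rw [if_neg hN, coeff_Phi_zero 1 N le_rfl (by omega)]

lemma ds_ne_zero : ds ≠ 0 := by
  simp only [ds]
  rw [map_ne_zero_iff _ (IsFractionRing.injective (MvPolynomial (Fin 3) ℚ) DessinField)]
  exact MvPolynomial.X_ne_zero 0

end DessinAux

set_option maxHeartbeats 1600000 in
open DessinAux in
/-- `y = -1/(2s) + (u+v)ξ/2 + G(ξ)` satisfies the dessin spectral curve equation
`y² = 1/(4s²) - (u+v)ξ/(2s) + (u-v)²ξ²/4` (in the variable `ξ = 1/x`). -/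
theorem dessin_spectral_curve_from_one_point_function :
    (PowerSeries.C (R := DessinField) (-(2 * ds)⁻¹)
        + PowerSeries.C (R := DessinField) ((du + dv) / 2) * PowerSeries.X
        + dessinG01) ^ 2
      = PowerSeries.C (R := DessinField) (1 / (4 * ds ^ 2))
        - PowerSeries.C (R := DessinField) ((du + dv) / (2 * ds)) * PowerSeries.X
        + PowerSeries.C (R := DessinField) ((du - dv) ^ 2 / 4) * PowerSeries.X ^ 2 := by
  have hs : ds ≠ 0 := ds_ne_zero
  have hq := quad
  rw [← G_eq] at hq
  have htwo : (2 : PowerSeries DessinField) = PowerSeries.C (R := DessinField) 2 :=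
    (map_ofNat _ 2).symm
  have c1 : PowerSeries.C (R := DessinField) (-(2*ds)⁻¹) * PowerSeries.C (R := DessinField) (-(2*ds)⁻¹)
      = PowerSeries.C (R := DessinField) (1/(4*ds^2)) := by
    rw [← map_mul]; congr 1; field_simp; ring
  have c2 : 2 * PowerSeries.C (R := DessinField) (-(2*ds)⁻¹) * PowerSeries.C (R := DessinField) ((du+dv)/2)
      = - PowerSeries.C (R := DessinField) ((du+dv)/(2*ds)) := by
    rw [htwo, ← map_mul, ← map_mul, ← map_neg]; congr 1; field_simp
  have c3 : PowerSeries.C (R := DessinField) ((du+dv)/2) * PowerSeries.C (R := DessinField) ((du+dv)/2)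
      = PowerSeries.C (R := DessinField) ((du-dv)^2/4) + PowerSeries.C (R := DessinField) (du*dv) := by
    rw [← map_mul, ← map_add]; congr 1; field_simp; ring
  have c5 : 2 * PowerSeries.C (R := DessinField) (-(2*ds)⁻¹) * PowerSeries.C (R := DessinField) ds
      = -1 := by
    rw [htwo, ← map_mul, ← map_mul, show (-1 : PowerSeries DessinField)
      = PowerSeries.C (R := DessinField) (-1) from by rw [map_neg, map_one]]
    congr 1; field_simp
  have c7 : PowerSeries.C (R := DessinField) (ds*(du+dv))
      = 2 * PowerSeries.C (R := DessinField) ds * PowerSeries.C (R := DessinField) ((du+dv)/2) := by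
    rw [htwo, ← map_mul, ← map_mul]; congr 1; field_simp
  have c9 : PowerSeries.C (R := DessinField) (ds*du*dv)
      = PowerSeries.C (R := DessinField) ds * PowerSeries.C (R := DessinField) (du*dv) := by
    rw [← map_mul]; congr 1; ring
  linear_combination c1 + PowerSeries.X * c2 + PowerSeries.X^2 * c3
    + (2 * PowerSeries.C (R := DessinField) (-(2*ds)⁻¹)) * hq
    + (dessinG01^2 + 2*PowerSeries.C (R := DessinField) ((du+dv)/2) * dessinG01 * PowerSeries.X
        + PowerSeries.C (R := DessinField) (du*dv) * PowerSeries.X^2) * c5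
    + (2 * PowerSeries.C (R := DessinField) (-(2*ds)⁻¹) * dessinG01 * PowerSeries.X) * c7
    + (2 * PowerSeries.C (R := DessinField) (-(2*ds)⁻¹) * PowerSeries.X^2) * c9

end
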